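/- For real numbers p, α ∈ [0,1] with α ≥ |1 − 2p|, the Shannon entropy (base 2) of the probability vector ((2p−1+α)/2, (1−2p+α)/2, (1−α)/2, (1−α)/2) is at most h(α) + h(p), where h is the binary entropy function. -/

import Mathlib

open Real

noncomputable def binEnt (t : ℝ) : ℝ := -(t * Real.logb 2 t) - (1 - t) * Real.logb 2 (1 - t)

lemma natlog_key (p α : ℝ) (hp0 : 0 ≤ p) (hp1 : p ≤ 1) (hα0 : 0 ≤ α) (hα1 : α ≤ 1)
    (h : |1 - 2 * p| ≤ α) :
    negMulLog ((2 * p - 1 + α) / 2) + negMulLog ((1 - 2 * p + α) / 2)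
      + 2 * negMulLog ((1 - α) / 2) ≤ binEntropy α + binEntropy p := by
  have habs := abs_le.mp h
  rcases eq_or_lt_of_le hα0 with hα | hα
  · -- α = 0, so p = 1/2
    have hp : p = 1/2 := by nlinarith [habs.1, habs.2]
    subst hp
    rw [← hα]
    norm_num [negMulLog, binEntropy, Real.log_inv]
    rw [show (1:ℝ)/2 = 2⁻¹ by norm_num, Real.log_inv]
    linarith [le_refl (Real.log 2)]
  · set x : ℝ := (2 * p - 1 + α) / (2 * α) with hx
    have hx0 : 0 ≤ x := by
      apply div_nonneg _ (by linarith)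
      nlinarith [habs.2]
    have hx1 : x ≤ 1 := by
      rw [div_le_one (by linarith)]
      nlinarith [habs.1]
    have ha : (2 * p - 1 + α) / 2 = α * x := by rw [hx]; field_simp
    have hb : (1 - 2 * p + α) / 2 = α * (1 - x) := by rw [hx]; field_simp; ring
    have hc : (1 - α) / 2 = (1 - α) * (1/2) := by ring
    have hp' : α * x + (1 - α) * (1/2) = p := by
      rw [hx]; field_simp; ring
    have hconc := (strictConcave_binEntropy.concaveOn).2
      (Set.mem_Icc.mpr ⟨hx0, hx1⟩) (Set.mem_Icc.mpr (by norm_num : (0:ℝ) ≤ 1/2 ∧ (1:ℝ)/2 ≤ 1))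
      (le_of_lt hα) (by linarith : (0:ℝ) ≤ 1 - α) (by ring)
    simp only [smul_eq_mul] at hconc
    rw [hp'] at hconc
    have hhalf : binEntropy (1/2) = Real.log 2 := by
      rw [show (1:ℝ)/2 = 2⁻¹ by norm_num, binEntropy_two_inv]
    rw [ha, hb, hc, negMulLog_mul, negMulLog_mul, negMulLog_mul,
      binEntropy_eq_negMulLog_add_negMulLog_one_sub α]
    have hnh : negMulLog (1/2) = (1/2) * Real.log 2 := by
      rw [negMulLog, show (1:ℝ)/2 = 2⁻¹ by norm_num, Real.log_inv]; ring
    have hbx : negMulLog x + negMulLog (1 - x) = binEntropy x :=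
      (binEntropy_eq_negMulLog_add_negMulLog_one_sub x).symm
    nlinarith [hconc, hhalf, hnh, hbx]

/-- H((2p−1+α)/2, (1−2p+α)/2, (1−α)/2, (1−α)/2) ≤ h(α) + h(p). -/
theorem stmt15 (p α : ℝ) (hp0 : 0 ≤ p) (hp1 : p ≤ 1) (hα0 : 0 ≤ α) (hα1 : α ≤ 1)
    (h : |1 - 2 * p| ≤ α) :
    -(((2 * p - 1 + α) / 2) * Real.logb 2 ((2 * p - 1 + α) / 2))
      - ((1 - 2 * p + α) / 2) * Real.logb 2 ((1 - 2 * p + α) / 2)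
      - ((1 - α) / 2) * Real.logb 2 ((1 - α) / 2)
      - ((1 - α) / 2) * Real.logb 2 ((1 - α) / 2)
    ≤ binEnt α + binEnt p := by
  have h2 : (0:ℝ) < Real.log 2 := Real.log_pos (by norm_num)
  have key := natlog_key p α hp0 hp1 hα0 hα1 h
  calc -(((2 * p - 1 + α) / 2) * Real.logb 2 ((2 * p - 1 + α) / 2))
      - ((1 - 2 * p + α) / 2) * Real.logb 2 ((1 - 2 * p + α) / 2)
      - ((1 - α) / 2) * Real.logb 2 ((1 - α) / 2)
      - ((1 - α) / 2) * Real.logb 2 ((1 - α) / 2)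
      = (negMulLog ((2 * p - 1 + α) / 2) + negMulLog ((1 - 2 * p + α) / 2)
          + 2 * negMulLog ((1 - α) / 2)) / Real.log 2 := by
        simp only [Real.logb, negMulLog]; ring
    _ ≤ (binEntropy α + binEntropy p) / Real.log 2 := by gcongr
    _ = binEnt α + binEnt p := by
        simp only [binEnt, Real.logb, binEntropy, Real.log_inv]; ring
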